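/- Let T be a bounded operator on H that has Toeplitz matrix with coefficient sequence c : ℤ → ℂ. For w in the open unit disc 𝔻 let ẽ_w ∈ H be the sequence n ↦ (1 − |w|²)·conj(w)^{n−1} (the coefficient vector of the normalized kernel Ẽ_w). Then ẽ_w is a unit vector in H and ⟨T ẽ_w, ẽ_w⟩ = w·(1 − |w|²)·Σ_{k≥1} k·c(k)·w^{k−1} + Σ_{k≥1} c(k)·w^k + Σ_{k≥0} c(−k)·conj(w)^k, all series being absolutely convergent. -/

import Mathlib

open scoped ComplexConjugate

local notation "⟪" x ", " y "⟫" => @inner ℂ _ _ x y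

section helpers
variable {H : Type*} [NormedAddCommGroup H] [InnerProductSpace ℂ H] [CompleteSpace H]

omit [CompleteSpace H] in
lemma my_tsum_inner_right {ι : Type*} (y : H) {f : ι → H} (hf : Summable f) :
    ⟪y, ∑' n, f n⟫ = ∑' n, ⟪y, f n⟫ := by
  simpa using (innerSL ℂ y).map_tsum hf

omit [CompleteSpace H] in
lemma my_tsum_inner_left {ι : Type*} (y : H) {f : ι → H} (hf : Summable f) :
    ⟪∑' n, f n, y⟫ = ∑' n, ⟪f n, y⟫ := by
  calc ⟪∑' n, f n, y⟫ = conj ⟪y, ∑' n, f n⟫ := (inner_conj_symm _ _).symm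
    _ = conj (∑' n, ⟪y, f n⟫) := by rw [my_tsum_inner_right y hf]
    _ = ∑' n, conj ⟪y, f n⟫ := by simp only [starRingEnd_apply]; exact tsum_star
    _ = ∑' n, ⟪f n, y⟫ := by simp only [inner_conj_symm]

end helpers

/-- The equiv from `ℕ × ℕ` onto the strictly-lower-diagonal part `{p | p.2 < p.1}`. -/
def eqLower : (ℕ × ℕ) ≃ {p : ℕ × ℕ | p.2 < p.1} where
  toFun p := ⟨(p.2 + p.1 + 1, p.2), by simp only [Set.mem_setOf_eq]; omega⟩
  invFun q := (q.1.1 - q.1.2 - 1, q.1.2)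
  left_inv p := by ext <;> simp <;> omega
  right_inv q := by
    have := q.2
    simp only [Set.mem_setOf_eq] at this
    apply Subtype.ext
    ext <;> simp <;> omega

/-- The equiv from `ℕ × ℕ` onto `{p | p.2 < p.1}ᶜ`. -/
def eqUpper : (ℕ × ℕ) ≃ ↥({p : ℕ × ℕ | p.2 < p.1}ᶜ) where
  toFun p := ⟨(p.2, p.2 + p.1), by simp⟩
  invFun q := (q.1.2 - q.1.1, q.1.1)
  left_inv p := by ext <;> simp
  right_inv q := by
    have := q.2
    simp only [Set.mem_compl_iff, Set.mem_setOf_eq, not_lt] at this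
    apply Subtype.ext
    ext <;> simp <;> omega


/-- The coefficient vector of the normalized kernel `Ẽ_w` in the coefficient model of the
Dirichlet space: the sequence `n ↦ (1 − |w|²)·conj(w)^(n−1)` (for `n ≥ 1`), i.e.
`ẽ_w = ∑_{n ≥ 1} (1 − |w|²)·conj(w)^(n−1) • e n`. -/
noncomputable def etilde {H : Type*} [NormedAddCommGroup H] [InnerProductSpace ℂ H]
    (e : ℕ → H) (w : ℂ) : H :=
  ∑' n : ℕ, ((((1 - ‖w‖ ^ 2 : ℝ) : ℂ)) * (conj w) ^ n) • e (n + 1)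

theorem statement15 {H : Type*} [NormedAddCommGroup H] [InnerProductSpace ℂ H]
    [CompleteSpace H]
    (e : ℕ → H)
    (horth : ∀ m n : ℕ, 1 ≤ m → 1 ≤ n → ⟪e m, e n⟫ = if m = n then (m : ℂ) else 0)
    (hdense : Dense (Submodule.span ℂ (e '' {n : ℕ | 1 ≤ n}) : Set H))
    (T : H →L[ℂ] H) (c : ℤ → ℂ)
    (hT : ∀ m n : ℕ, 1 ≤ m → 1 ≤ n → ⟪e m, T (e n)⟫ = (m : ℂ) * c ((m : ℤ) - n)) :
    ∀ w ∈ Metric.ball (0 : ℂ) 1,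
      -- the series defining `ẽ_w` converges in `H`, and `ẽ_w` is a unit vector
      Summable (fun n : ℕ => ((((1 - ‖w‖ ^ 2 : ℝ) : ℂ)) * (conj w) ^ n) • e (n + 1)) ∧
      ‖etilde e w‖ = 1 ∧
      -- the three series below are absolutely convergent
      Summable (fun k : ℕ => ‖((k : ℂ) + 1) * c ((k : ℤ) + 1) * w ^ k‖) ∧
      Summable (fun k : ℕ => ‖c ((k : ℤ) + 1) * w ^ (k + 1)‖) ∧
      Summable (fun k : ℕ => ‖c (-(k : ℤ)) * (conj w) ^ k‖) ∧
      -- the Berezin-type formula `⟨T ẽ_w, ẽ_w⟩ = w(1−|w|²)·Σ k c(k) w^(k−1) + Σ c(k) w^k + Σ c(−k) conj(w)^k`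
      ⟪etilde e w, T (etilde e w)⟫
        = w * (((1 - ‖w‖ ^ 2 : ℝ) : ℂ)) * (∑' k : ℕ, ((k : ℂ) + 1) * c ((k : ℤ) + 1) * w ^ k)
          + (∑' k : ℕ, c ((k : ℤ) + 1) * w ^ (k + 1))
          + ∑' k : ℕ, c (-(k : ℤ)) * (conj w) ^ k := by
  intro w hw
  have hw1 : ‖w‖ < 1 := by simpa using mem_ball_zero_iff.mp hw
  have hw1' : ‖(‖w‖ : ℝ)‖ < 1 := by
    rwa [Real.norm_eq_abs, abs_of_nonneg (norm_nonneg w)]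
  set C : ℂ := ((1 - ‖w‖ ^ 2 : ℝ) : ℂ) with hC
  set x : ℂ := ((‖w‖ ^ 2 : ℝ) : ℂ) with hxdef
  have hx : ‖x‖ < 1 := by
    rw [hxdef, Complex.norm_real, Real.norm_eq_abs, abs_of_nonneg (by positivity)]
    nlinarith [norm_nonneg w]
  have hCx : C = 1 - x := by rw [hC, hxdef]; push_cast; ring
  have h1x : (1 : ℂ) - x ≠ 0 := by
    intro h
    rw [sub_eq_zero] at h
    rw [← h] at hx
    simp at hx
  have hwx : w * conj w = x := by
    rw [hxdef, Complex.mul_conj]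
    norm_cast
    rw [← Complex.sq_norm]
  have hconjC : conj C = C := by rw [hC]; exact Complex.conj_ofReal _
  have hconjα : ∀ m : ℕ, conj (C * conj w ^ m) = C * w ^ m := by
    intro m
    rw [map_mul, map_pow, Complex.conj_conj, hconjC]
  have hnα : ∀ n : ℕ, ‖C * conj w ^ n‖ = ‖C‖ * ‖w‖ ^ n := by
    intro n
    rw [norm_mul, norm_pow, RCLike.norm_conj]
  have hnormk : ∀ k : ℕ, ‖((k : ℂ) + 1)‖ = (k : ℝ) + 1 := by
    intro k
    have h : ((k : ℂ) + 1) = ((k + 1 : ℕ) : ℂ) := by push_cast; ring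
    rw [h, Complex.norm_natCast]; push_cast; ring
  -- norms of the basis vectors
  have hne : ∀ n : ℕ, ‖e (n + 1)‖ ≤ (n : ℝ) + 1 := by
    intro n
    have h := horth (n + 1) (n + 1) (by omega) (by omega)
    rw [if_pos rfl, inner_self_eq_norm_sq_to_K] at h
    have h2 : ‖e (n + 1)‖ ^ 2 = ((n + 1 : ℕ) : ℝ) := by
      apply Complex.ofReal_injective
      push_cast at h ⊢
      exact h
    push_cast at h2
    nlinarith [norm_nonneg (e (n + 1))]
  -- geometric summability bound
  have hgeo : Summable (fun n : ℕ => ((n : ℝ) + 1) * ‖w‖ ^ n) := by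
    have h1 := summable_pow_mul_geometric_of_norm_lt_one (R := ℝ) 1 hw1'
    have h2 : Summable (fun n : ℕ => (‖w‖ : ℝ) ^ n) := summable_geometric_of_norm_lt_one hw1'
    simpa [add_mul, pow_one] using h1.add h2
  -- Conjunct 1 : summability of the defining series
  have hf1 : Summable (fun n : ℕ => (C * conj w ^ n) • e (n + 1)) := by
    apply Summable.of_norm
    apply Summable.of_nonneg_of_le (fun n => norm_nonneg _) _ (hgeo.mul_left ‖C‖)
    intro n
    rw [norm_smul, hnα n]
    calc ‖C‖ * ‖w‖ ^ n * ‖e (n + 1)‖ ≤ ‖C‖ * ‖w‖ ^ n * ((n : ℝ) + 1) := by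
          apply mul_le_mul_of_nonneg_left (hne n) (by positivity)
      _ = ‖C‖ * (((n : ℝ) + 1) * ‖w‖ ^ n) := by ring
  have het : etilde e w = ∑' n : ℕ, (C * conj w ^ n) • e (n + 1) := by rw [hC]; rfl
  -- diagonal inner products
  have hip : ∀ m n : ℕ, ⟪e (m + 1), e (n + 1)⟫ = if m = n then ((m : ℂ) + 1) else 0 := by
    intro m n
    rw [horth _ _ (by omega) (by omega)]
    by_cases h : m = n
    · subst h
      rw [if_pos rfl, if_pos rfl]
      push_cast
      ring
    · have hne' : m + 1 ≠ n + 1 := by omega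
      simp [h, hne']
  have hipT : ∀ m n : ℕ, ⟪e (m + 1), T (e (n + 1))⟫ = ((m : ℂ) + 1) * c ((m : ℤ) - n) := by
    intro m n
    rw [hT _ _ (by omega) (by omega)]
    have h1 : (((m + 1 : ℕ)) : ℂ) = (m : ℂ) + 1 := by push_cast; ring
    have h2 : ((m + 1 : ℕ) : ℤ) - ((n + 1 : ℕ) : ℤ) = (m : ℤ) - n := by push_cast; ring
    rw [h1, h2]
  -- summability of complex geometric-type series
  have h1c : Summable (fun n : ℕ => (n : ℂ) * x ^ n) := by
    have := summable_pow_mul_geometric_of_norm_lt_one (R := ℂ) 1 hx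
    simpa using this
  have h2c : Summable (fun n : ℕ => x ^ n) := summable_geometric_of_norm_lt_one hx
  have hsum1 : ∑' m : ℕ, (((m : ℂ) + 1) * x ^ m) = x / (1 - x) ^ 2 + (1 - x)⁻¹ := by
    rw [show (fun m : ℕ => ((m : ℂ) + 1) * x ^ m) = fun m : ℕ => (m : ℂ) * x ^ m + x ^ m from
      funext fun m : ℕ => by ring]
    rw [Summable.tsum_add h1c h2c, tsum_coe_mul_geometric_of_norm_lt_one hx,
      tsum_geometric_of_norm_lt_one hx]
  have hone : C ^ 2 * (x / (1 - x) ^ 2 + (1 - x)⁻¹) = 1 := by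
    rw [hCx]; field_simp; ring
  -- Conjunct 2 : ‖ẽ_w‖ = 1
  have hee : ⟪etilde e w, etilde e w⟫ = 1 := by
    rw [het, my_tsum_inner_left _ hf1]
    have hterm : ∀ m : ℕ, ⟪(C * conj w ^ m) • e (m + 1), ∑' n : ℕ, (C * conj w ^ n) • e (n + 1)⟫
        = C ^ 2 * (((m : ℂ) + 1) * x ^ m) := by
      intro m
      rw [inner_smul_left, my_tsum_inner_right _ hf1]
      have hin : ∑' n : ℕ, ⟪e (m + 1), (C * conj w ^ n) • e (n + 1)⟫
          = (C * conj w ^ m) * ((m : ℂ) + 1) := by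
        rw [tsum_eq_single m]
        · rw [inner_smul_right, hip m m]; simp
        · intro n hn
          rw [inner_smul_right, hip m n]
          simp [Ne.symm hn]
      rw [hin, hconjα]
      rw [← hwx]
      ring
    rw [tsum_congr hterm, tsum_mul_left, hsum1, hone]
  have hn1 : ‖etilde e w‖ = 1 := by
    rw [inner_self_eq_norm_sq_to_K] at hee
    have h2 : ‖etilde e w‖ ^ 2 = (1 : ℝ) := by
      apply Complex.ofReal_injective
      push_cast at hee ⊢
      exact hee
    nlinarith [norm_nonneg (etilde e w)]
  -- the coefficient bound
  have hcb : ∀ m n : ℕ, ‖c ((m : ℤ) - n)‖ ≤ ‖T‖ * ((n : ℝ) + 1) := by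
    intro m n
    have h := hipT m n
    have hb : ‖⟪e (m + 1), T (e (n + 1))⟫‖ ≤ ((m : ℝ) + 1) * (‖T‖ * ((n : ℝ) + 1)) := by
      calc ‖⟪e (m + 1), T (e (n + 1))⟫‖ ≤ ‖e (m + 1)‖ * ‖T (e (n + 1))‖ :=
            norm_inner_le_norm _ _
        _ ≤ ‖e (m + 1)‖ * (‖T‖ * ‖e (n + 1)‖) := by
            apply mul_le_mul_of_nonneg_left (T.le_opNorm _) (norm_nonneg _)
        _ ≤ ((m : ℝ) + 1) * (‖T‖ * ((n : ℝ) + 1)) := by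
            apply mul_le_mul (hne m) _ (by positivity) (by positivity)
            exact mul_le_mul_of_nonneg_left (hne n) (norm_nonneg T)
    rw [h, norm_mul, hnormk m] at hb
    have hmpos : (0 : ℝ) < (m : ℝ) + 1 := by positivity
    exact le_of_mul_le_mul_left hb hmpos
  have hcb1 : ∀ k : ℕ, ‖c ((k : ℤ) + 1)‖ ≤ ‖T‖ := by
    intro k
    have h := hcb (k + 1) 0
    simpa using h
  have hcb2 : ∀ k : ℕ, ‖c (-(k : ℤ))‖ ≤ ‖T‖ * ((k : ℝ) + 1) := by
    intro k
    have h := hcb 0 k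
    simpa using h
  -- Conjunct 3
  have hs3 : Summable (fun k : ℕ => ‖((k : ℂ) + 1) * c ((k : ℤ) + 1) * w ^ k‖) := by
    apply Summable.of_nonneg_of_le (fun n => norm_nonneg _) _ (hgeo.mul_left ‖T‖)
    intro k
    rw [norm_mul, norm_mul, norm_pow, hnormk k]
    calc ((k : ℝ) + 1) * ‖c ((k : ℤ) + 1)‖ * ‖w‖ ^ k
        ≤ ((k : ℝ) + 1) * ‖T‖ * ‖w‖ ^ k := by
          have := hcb1 k
          gcongr
      _ = ‖T‖ * (((k : ℝ) + 1) * ‖w‖ ^ k) := by ring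
  -- Conjunct 4
  have hs4 : Summable (fun k : ℕ => ‖c ((k : ℤ) + 1) * w ^ (k + 1)‖) := by
    apply Summable.of_nonneg_of_le (fun n => norm_nonneg _) _
      ((summable_geometric_of_norm_lt_one hw1').mul_left (‖T‖ * ‖w‖))
    intro k
    rw [norm_mul, norm_pow]
    calc ‖c ((k : ℤ) + 1)‖ * ‖w‖ ^ (k + 1) ≤ ‖T‖ * ‖w‖ ^ (k + 1) := by
          have := hcb1 k
          gcongr
      _ = ‖T‖ * ‖w‖ * ‖w‖ ^ k := by ring
  -- Conjunct 5
  have hs5 : Summable (fun k : ℕ => ‖c (-(k : ℤ)) * (conj w) ^ k‖) := by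
    apply Summable.of_nonneg_of_le (fun n => norm_nonneg _) _ (hgeo.mul_left ‖T‖)
    intro k
    rw [norm_mul, norm_pow, RCLike.norm_conj]
    calc ‖c (-(k : ℤ))‖ * ‖w‖ ^ k ≤ (‖T‖ * ((k : ℝ) + 1)) * ‖w‖ ^ k := by
          have := hcb2 k
          gcongr
      _ = ‖T‖ * (((k : ℝ) + 1) * ‖w‖ ^ k) := by ring
  refine ⟨hf1, hn1, hs3, hs4, hs5, ?_⟩
  -- the image of the series under `T`
  have hTf : Summable (fun n : ℕ => (C * conj w ^ n) • T (e (n + 1))) := by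
    have := hf1.mapL T
    simpa [map_smul] using this
  have hTe : T (etilde e w) = ∑' n : ℕ, (C * conj w ^ n) • T (e (n + 1)) := by
    rw [het, T.map_tsum hf1]
    exact tsum_congr fun n => by simp
  -- the matrix entries function
  set F : ℕ × ℕ → ℂ := fun p =>
    conj (C * conj w ^ p.1) * ((C * conj w ^ p.2) * (((p.1 : ℂ) + 1) * c ((p.1 : ℤ) - p.2)))
    with hF
  have hA : ⟪etilde e w, T (etilde e w)⟫ = ∑' m : ℕ, ∑' n : ℕ, F (m, n) := by
    rw [hTe, het, my_tsum_inner_left _ hf1]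
    apply tsum_congr
    intro m
    rw [inner_smul_left, my_tsum_inner_right _ hTf, ← tsum_mul_left]
    apply tsum_congr
    intro n
    rw [inner_smul_right, hipT m n]
  -- absolute summability of the double series
  have hFnorm : Summable (fun p : ℕ × ℕ => ‖F p‖) := by
    have hmul := Summable.mul_of_nonneg (hgeo.mul_left ‖C‖) (hgeo.mul_left (‖C‖ * ‖T‖))
      (fun n => by positivity) (fun n => by positivity)
    apply Summable.of_nonneg_of_le (fun p => norm_nonneg _) _ hmul
    intro p
    calc ‖F p‖
        = (‖C‖ * ‖w‖ ^ p.1) * ((‖C‖ * ‖w‖ ^ p.2) * (((p.1 : ℝ) + 1) * ‖c ((p.1 : ℤ) - p.2)‖)) := by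
          simp only [hF, norm_mul, RCLike.norm_conj, norm_pow, hnormk]
      _ ≤ (‖C‖ * ‖w‖ ^ p.1) * ((‖C‖ * ‖w‖ ^ p.2) * (((p.1 : ℝ) + 1) * (‖T‖ * ((p.2 : ℝ) + 1)))) := by
          have := hcb p.1 p.2
          gcongr
      _ = (‖C‖ * (((p.1 : ℝ) + 1) * ‖w‖ ^ p.1)) * ((‖C‖ * ‖T‖) * (((p.2 : ℝ) + 1) * ‖w‖ ^ p.2)) := by
          ring
  have hFs : Summable F := hFnorm.of_norm
  have hA2 : ∑' p : ℕ × ℕ, F p = ∑' m : ℕ, ∑' n : ℕ, F (m, n) :=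
    Summable.tsum_prod' hFs fun m => hFs.prod_factor m
  have hsplit := Summable.tsum_subtype_add_tsum_subtype_compl hFs {p : ℕ × ℕ | p.2 < p.1}
  -- lower (strictly below diagonal) part
  have hlow : Summable (fun p : ℕ × ℕ => F (p.2 + p.1 + 1, p.2)) := by
    have h1 : Summable (fun q : {p : ℕ × ℕ | p.2 < p.1} => F q) := hFs.subtype _
    exact (eqLower.summable_iff (f := fun q : {p : ℕ × ℕ | p.2 < p.1} => F q)).mpr h1
  have hlowsum : (∑' q : {p : ℕ × ℕ | p.2 < p.1}, F q) = ∑' k : ℕ, ∑' n : ℕ, F (n + k + 1, n) := by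
    rw [← eqLower.tsum_eq (fun q : {p : ℕ × ℕ | p.2 < p.1} => F q)]
    exact Summable.tsum_prod' hlow fun b => hlow.prod_factor b
  have hinner1 : ∀ k : ℕ, (∑' n : ℕ, F (n + k + 1, n))
      = (C * w) * (((k : ℂ) + 1) * c ((k : ℤ) + 1) * w ^ k) + c ((k : ℤ) + 1) * w ^ (k + 1) := by
    intro k
    have hptw : ∀ n : ℕ, F (n + k + 1, n)
        = (C ^ 2 * w ^ (k + 1) * c ((k : ℤ) + 1)) * (((n : ℂ) + ((k : ℂ) + 2)) * x ^ n) := by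
      intro n
      show conj (C * conj w ^ (n + k + 1)) * ((C * conj w ^ n) *
        ((((n + k + 1 : ℕ) : ℂ) + 1) * c (((n + k + 1 : ℕ) : ℤ) - (n : ℤ)))) = _
      rw [hconjα]
      have harg : ((n + k + 1 : ℕ) : ℤ) - (n : ℤ) = (k : ℤ) + 1 := by push_cast; ring
      rw [harg, ← hwx]
      push_cast
      ring
    calc (∑' n : ℕ, F (n + k + 1, n))
        = ∑' n : ℕ, (C ^ 2 * w ^ (k + 1) * c ((k : ℤ) + 1)) * (((n : ℂ) + ((k : ℂ) + 2)) * x ^ n) :=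
          tsum_congr hptw
      _ = (C ^ 2 * w ^ (k + 1) * c ((k : ℤ) + 1)) * ∑' n : ℕ, (((n : ℂ) + ((k : ℂ) + 2)) * x ^ n) :=
          tsum_mul_left
      _ = (C ^ 2 * w ^ (k + 1) * c ((k : ℤ) + 1)) * (x / (1 - x) ^ 2 + ((k : ℂ) + 2) * (1 - x)⁻¹) := by
          rw [show (fun n : ℕ => (((n : ℂ) + ((k : ℂ) + 2)) * x ^ n))
              = fun n : ℕ => (n : ℂ) * x ^ n + ((k : ℂ) + 2) * x ^ n from funext fun n : ℕ => by ring,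
            Summable.tsum_add h1c (h2c.mul_left _), tsum_coe_mul_geometric_of_norm_lt_one hx,
            tsum_mul_left, tsum_geometric_of_norm_lt_one hx]
      _ = (C * w) * (((k : ℂ) + 1) * c ((k : ℤ) + 1) * w ^ k) + c ((k : ℤ) + 1) * w ^ (k + 1) := by
          rw [hCx]
          field_simp
          ring
  have hlowval : (∑' q : {p : ℕ × ℕ | p.2 < p.1}, F q)
      = (C * w) * (∑' k : ℕ, ((k : ℂ) + 1) * c ((k : ℤ) + 1) * w ^ k)
        + ∑' k : ℕ, c ((k : ℤ) + 1) * w ^ (k + 1) := by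
    rw [hlowsum, tsum_congr hinner1,
      Summable.tsum_add ((hs3.of_norm).mul_left (C * w)) (hs4.of_norm), tsum_mul_left]
  -- upper (on or above diagonal) part
  have hupp : Summable (fun p : ℕ × ℕ => F (p.2, p.2 + p.1)) := by
    have h1 : Summable (fun q : ↥({p : ℕ × ℕ | p.2 < p.1}ᶜ) => F q) := hFs.subtype _
    exact (eqUpper.summable_iff (f := fun q : ↥({p : ℕ × ℕ | p.2 < p.1}ᶜ) => F q)).mpr h1
  have huppsum : (∑' q : ↥({p : ℕ × ℕ | p.2 < p.1}ᶜ), F q) = ∑' j : ℕ, ∑' m : ℕ, F (m, m + j) := by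
    rw [← eqUpper.tsum_eq (fun q : ↥({p : ℕ × ℕ | p.2 < p.1}ᶜ) => F q)]
    exact Summable.tsum_prod' hupp fun b => hupp.prod_factor b
  have hinner2 : ∀ j : ℕ, (∑' m : ℕ, F (m, m + j)) = c (-(j : ℤ)) * conj w ^ j := by
    intro j
    have hptw : ∀ m : ℕ, F (m, m + j)
        = (c (-(j : ℤ)) * conj w ^ j) * (C ^ 2 * (((m : ℂ) + 1) * x ^ m)) := by
      intro m
      show conj (C * conj w ^ m) * ((C * conj w ^ (m + j)) *
        (((m : ℂ) + 1) * c ((m : ℤ) - ((m + j : ℕ) : ℤ)))) = _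
      rw [hconjα]
      have harg : (m : ℤ) - ((m + j : ℕ) : ℤ) = -(j : ℤ) := by push_cast; ring
      rw [harg, ← hwx]
      ring
    rw [tsum_congr hptw, tsum_mul_left, tsum_mul_left, hsum1, hone, mul_one]
  have hfinal : ⟪etilde e w, T (etilde e w)⟫
      = ((C * w) * (∑' k : ℕ, ((k : ℂ) + 1) * c ((k : ℤ) + 1) * w ^ k)
          + ∑' k : ℕ, c ((k : ℤ) + 1) * w ^ (k + 1))
        + ∑' k : ℕ, c (-(k : ℤ)) * conj w ^ k := by
    rw [hA, ← hA2, ← hsplit, hlowval, huppsum, tsum_congr hinner2]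
  rw [hfinal]
  ring
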